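/- arXiv:2509.15691 — 7 statements merged into one kernel-verified Lean document; each statement's English description precedes it below -/
import Mathlib

section
/- Let n be a natural number, c a real number, s a nonzero real number, and w_0, …, w_n real numbers. Define a^s_n(x) = Σ_{i=0}^{n} (s^i w_i c^i / i!) x^i and b^s_n(x) = Σ_{j=0}^{n} (s^j (1-c)^j / j!) x^j in ℝ[x]. Then for every k with 0 ≤ k ≤ n, Σ_{i=0}^{k} B^k_i(c) w_i = s^{-k} · k! · (coefficient of x^k in a^s_n(x)·b^s_n(x)). -/
/-- The `i`-th Bernstein basis polynomial of degree `n`: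
`B^n_i(t) = C(n,i) * t^i * (1-t)^(n-i)`. -/
noncomputable def bern (n i : ℕ) (t : ℝ) : ℝ :=
  (n.choose i : ℝ) * t ^ i * (1 - t) ^ (n - i)

theorem bezier_subdiv_coeff_eq_scaled_coeff
    (n : ℕ) (c s : ℝ) (hs : s ≠ 0) (w : ℕ → ℝ) (a b : Polynomial ℝ)
    (ha : a = ∑ i ∈ Finset.range (n + 1),
      Polynomial.C (s ^ i * w i * c ^ i / (Nat.factorial i : ℝ)) * Polynomial.X ^ i)
    (hb : b = ∑ j ∈ Finset.range (n + 1),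
      Polynomial.C (s ^ j * (1 - c) ^ j / (Nat.factorial j : ℝ)) * Polynomial.X ^ j) :
    ∀ k ≤ n,
      ∑ i ∈ Finset.range (k + 1), bern k i c * w i
        = (s ^ k)⁻¹ * (Nat.factorial k : ℝ) * (a * b).coeff k := by
  intro k hk
  have hac : ∀ i ≤ n, a.coeff i = s ^ i * w i * c ^ i / (Nat.factorial i : ℝ) := by
    intro i hi
    subst ha
    rw [Polynomial.finset_sum_coeff]
    simp only [Polynomial.coeff_C_mul, Polynomial.coeff_X_pow]
    rw [Finset.sum_eq_single i]
    · simp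
    · intro j hj hne
      simp [hne.symm]
    · intro h
      exact absurd (Finset.mem_range.2 (Nat.lt_succ_of_le hi)) h
  have hbc : ∀ j ≤ n, b.coeff j = s ^ j * (1 - c) ^ j / (Nat.factorial j : ℝ) := by
    intro j hj
    subst hb
    rw [Polynomial.finset_sum_coeff]
    simp only [Polynomial.coeff_C_mul, Polynomial.coeff_X_pow]
    rw [Finset.sum_eq_single j]
    · simp
    · intro i hi hne
      simp [hne.symm]
    · intro h
      exact absurd (Finset.mem_range.2 (Nat.lt_succ_of_le hj)) h
  rw [Polynomial.coeff_mul, Finset.Nat.sum_antidiagonal_eq_sum_range_succ_mk,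
    Finset.mul_sum]
  refine Finset.sum_congr rfl ?_
  intro i hi
  have hik : i ≤ k := Nat.lt_succ_iff.1 (Finset.mem_range.1 hi)
  rw [hac i (hik.trans hk), hbc (k - i) ((Nat.sub_le k i).trans hk)]
  have hs' : s ^ i * s ^ (k - i) = s ^ k := by
    rw [← pow_add, Nat.add_sub_cancel' hik]
  have hfac : ((k.choose i : ℝ)) * (Nat.factorial i : ℝ) * (Nat.factorial (k - i) : ℝ)
      = (Nat.factorial k : ℝ) := by
    have := Nat.choose_mul_factorial_mul_factorial hik
    exact_mod_cast congrArg (Nat.cast : ℕ → ℝ) this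
  have hif : (Nat.factorial i : ℝ) ≠ 0 := Nat.cast_ne_zero.2 (Nat.factorial_ne_zero i)
  have hjf : (Nat.factorial (k - i) : ℝ) ≠ 0 := Nat.cast_ne_zero.2 (Nat.factorial_ne_zero _)
  have hsk : (s ^ k : ℝ) ≠ 0 := pow_ne_zero _ hs
  unfold bern
  field_simp
  rw [← hs', ← hfac]
  ring
end

section
/- For all natural numbers n and i with 0 ≤ i ≤ n and all real numbers c and t, the Bernstein basis polynomials satisfy the subdivision identity B^n_i(c·t) = Σ_{k=i}^{n} B^k_i(c) · B^n_k(t). -/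
theorem bernstein_subdivision_identity
    (n i : ℕ) (hin : i ≤ n) (c t : ℝ) :
    bern n i (c * t) = ∑ k ∈ Finset.Icc i n, bern k i c * bern n k t := by
  have hre : Finset.Icc i n = Finset.Ico i (n + 1) := by
    rw [Finset.Ico_add_one_right_eq_Icc]
  rw [hre, Finset.sum_Ico_eq_sum_range]
  have hn1 : n + 1 - i = (n - i) + 1 := by omega
  rw [hn1]
  have key : (1 - c * t) ^ (n - i) =
      ∑ j ∈ Finset.range ((n - i) + 1),
        ((1 - c) * t) ^ j * (1 - t) ^ (n - i - j) * ((n - i).choose j : ℝ) := by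
    have := add_pow ((1 - c) * t) (1 - t) (n - i)
    have h1 : (1 - c) * t + (1 - t) = 1 - c * t := by ring
    rw [h1] at this
    rw [this]
  unfold bern
  rw [key, Finset.mul_sum]
  apply Finset.sum_congr rfl
  intro j hj
  rw [Finset.mem_range] at hj
  have hjn : j ≤ n - i := by omega
  have hchoose : (n.choose (i + j) : ℝ) * ((i + j).choose i : ℝ) =
      (n.choose i : ℝ) * ((n - i).choose j : ℝ) := by
    have := Nat.choose_mul (n := n) (k := i + j) (s := i) (by omega)
    have h2 : i + j - i = j := by omega
    rw [h2] at this
    exact_mod_cast congrArg (Nat.cast : ℕ → ℝ) this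
  have h3 : (i + j) - i = j := by omega
  have h4 : n - (i + j) = n - i - j := by omega
  rw [h3, h4]
  rw [pow_add]
  calc (n.choose i : ℝ) * (c * t) ^ i * (((1 - c) * t) ^ j * (1 - t) ^ (n - i - j) * ((n - i).choose j : ℝ))
      = ((n.choose i : ℝ) * ((n - i).choose j : ℝ)) * (c ^ i * (1 - c) ^ j * (t ^ i * t ^ j * (1 - t) ^ (n - i - j))) := by
        rw [mul_pow, mul_pow]; ring
    _ = ((n.choose (i + j) : ℝ) * ((i + j).choose i : ℝ)) * (c ^ i * (1 - c) ^ j * (t ^ i * t ^ j * (1 - t) ^ (n - i - j))) := by rw [hchoose]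
    _ = ((i + j).choose i : ℝ) * c ^ i * (1 - c) ^ j * ((n.choose (i + j) : ℝ) * (t ^ i * t ^ j) * (1 - t) ^ (n - i - j)) := by ring
end

section
/- Let d and n be natural numbers with d ≥ 1, let W_0, …, W_n be points of ℝ^d, and let c be a real number. Define the Bézier curve P_n(t) := Σ_{i=0}^{n} B^n_i(t) W_i and the subdivided control points V_k := Σ_{i=0}^{k} B^k_i(c) W_i for 0 ≤ k ≤ n. Then for every real number t, Σ_{k=0}^{n} B^n_k(t) V_k = P_n(c·t); that is, the curve with control points V_0, …, V_n parametrizes the left segment P_n([0,c]) when t ranges over [0,1]. -/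
lemma bern_zero_of_lt {n i : ℕ} (h : n < i) (t : ℝ) : bern n i t = 0 := by
  simp [bern, Nat.choose_eq_zero_of_lt h]

lemma bern_key (n i : ℕ) (hi : i ≤ n) (c t : ℝ) :
    ∑ k ∈ Finset.range (n + 1), bern n k t * bern k i c = bern n i (c * t) := by
  have h1 : ∑ k ∈ Finset.range (n + 1), bern n k t * bern k i c
      = ∑ k ∈ Finset.Ico i (n + 1), bern n k t * bern k i c := by
    rw [Finset.range_eq_Ico, ← Finset.sum_Ico_consecutive _ (Nat.zero_le i) (by omega)]
    have : ∑ k ∈ Finset.Ico 0 i, bern n k t * bern k i c = 0 := by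
      apply Finset.sum_eq_zero
      intro k hk
      simp only [Finset.mem_Ico] at hk
      rw [bern_zero_of_lt hk.2, mul_zero]
    rw [this, zero_add]
  rw [h1, Finset.sum_Ico_eq_sum_range]
  have h2 : (1 - c * t) ^ (n - i) = (t * (1 - c) + (1 - t)) ^ (n - i) := by ring_nf
  rw [bern, h2, add_pow]
  rw [Finset.mul_sum]
  have hrange : n + 1 - i = n - i + 1 := by omega
  rw [hrange]
  apply Finset.sum_congr rfl
  intro j hj
  simp only [Finset.mem_range] at hj
  have hji : j ≤ n - i := by omega
  have hik : i ≤ i + j := Nat.le_add_right _ _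
  have hkn : i + j ≤ n := by omega
  have hchoose : (n.choose (i + j) : ℝ) * ((i + j).choose i : ℝ)
      = (n.choose i : ℝ) * ((n - i).choose j : ℝ) := by
    rw [← Nat.cast_mul, ← Nat.cast_mul, Nat.choose_mul hik, Nat.add_sub_cancel_left]
  simp only [bern]
  have hsub1 : n - (i + j) = n - i - j := by omega
  have hsub2 : i + j - i = j := by omega
  rw [hsub1, hsub2, mul_pow, mul_pow, pow_add]
  linear_combination (t ^ i * t ^ j * (1 - t) ^ (n - i - j) * c ^ i * (1 - c) ^ j) * hchoose

theorem bezier_left_segment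
    (d n : ℕ) (hd : 1 ≤ d) (W : ℕ → (Fin d → ℝ)) (c : ℝ)
    (P : ℝ → (Fin d → ℝ))
    (hP : ∀ t : ℝ, P t = ∑ i ∈ Finset.range (n + 1), bern n i t • W i)
    (V : ℕ → (Fin d → ℝ))
    (hV : ∀ k ≤ n, V k = ∑ i ∈ Finset.range (k + 1), bern k i c • W i) :
    ∀ t : ℝ, ∑ k ∈ Finset.range (n + 1), bern n k t • V k = P (c * t) := by
  intro t
  rw [hP]
  have step : ∀ k ∈ Finset.range (n + 1),
      bern n k t • V k = ∑ i ∈ Finset.range (n + 1), (bern n k t * bern k i c) • W i := by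
    intro k hk
    simp only [Finset.mem_range] at hk
    rw [hV k (by omega)]
    rw [Finset.smul_sum]
    rw [← Finset.sum_subset (Finset.range_subset_range.2 (by omega : k + 1 ≤ n + 1))]
    · apply Finset.sum_congr rfl
      intro i _
      rw [smul_smul]
    · intro i _ hi
      simp only [Finset.mem_range, not_lt] at hi
      rw [bern_zero_of_lt (by omega) c, mul_zero, zero_smul]
  rw [Finset.sum_congr rfl step, Finset.sum_comm]
  apply Finset.sum_congr rfl
  intro i hi
  simp only [Finset.mem_range] at hi
  rw [← Finset.sum_smul, bern_key n i (by omega) c t]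
end

section
/- Let d and n be natural numbers with d ≥ 1, let W_0, …, W_n be points of ℝ^d, and let c be a real number. Define the Bézier curve P_n(t) := Σ_{i=0}^{n} B^n_i(t) W_i and, for 0 ≤ k ≤ n, the points U_k := Σ_{j=0}^{n-k} B^{n-k}_j(c) W_{k+j}. Then for every real number t, Σ_{k=0}^{n} B^n_k(t) U_k = P_n(c + (1-c)·t); that is, the bottom row of the de Casteljau table gives the control points of the right segment P_n([c,1]). -/
lemma key (n i : ℕ) (hi : i ≤ n) (t c : ℝ) :
    ∑ k ∈ Finset.range (i + 1), bern n k t * bern (n - k) (i - k) c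
      = bern n i (c + (1 - c) * t) := by
  have hx : c + (1 - c) * t = t + (1 - t) * c := by ring
  have hy : 1 - (t + (1 - t) * c) = (1 - t) * (1 - c) := by ring
  rw [bern, hx, hy, add_pow, mul_pow, Finset.mul_sum, Finset.sum_mul]
  refine Finset.sum_congr rfl fun k hk => ?_
  have hki : k ≤ i := Nat.lt_succ_iff.mp (Finset.mem_range.mp hk)
  have hsub : n - k - (i - k) = n - i := by omega
  have hnk : n - k = (i - k) + (n - i) := by omega
  have hcc : (n.choose k : ℝ) * (n - k).choose (i - k)
      = (n.choose i : ℝ) * i.choose k := by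
    rw [← Nat.cast_mul, ← Nat.cast_mul, ← Nat.choose_mul hki]
  simp only [bern, hsub]
  have hp : (1 - t) ^ (n - k) = (1 - t) ^ (i - k) * (1 - t) ^ (n - i) := by
    rw [hnk, pow_add]
  rw [hp]; simp only [mul_pow]
  linear_combination (t ^ k * (1 - t) ^ (i - k) * c ^ (i - k) * (1 - t) ^ (n - i) * (1 - c) ^ (n - i)) * hcc

theorem bezier_right_segment
    (d n : ℕ) (hd : 1 ≤ d) (W : ℕ → (Fin d → ℝ)) (c : ℝ)
    (P : ℝ → (Fin d → ℝ))
    (hP : ∀ t : ℝ, P t = ∑ i ∈ Finset.range (n + 1), bern n i t • W i)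
    (U : ℕ → (Fin d → ℝ))
    (hU : ∀ k ≤ n, U k = ∑ j ∈ Finset.range (n - k + 1), bern (n - k) j c • W (k + j)) :
    ∀ t : ℝ, ∑ k ∈ Finset.range (n + 1), bern n k t • U k = P (c + (1 - c) * t) := by
  intro t
  rw [hP]
  calc ∑ k ∈ Finset.range (n + 1), bern n k t • U k
      = ∑ k ∈ Finset.Ico 0 (n + 1), ∑ i ∈ Finset.Ico k (n + 1),
          (bern n k t * bern (n - k) (i - k) c) • W i := by
        rw [← Finset.range_eq_Ico]
        refine Finset.sum_congr rfl fun k hk => ?_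
        have hkn : k ≤ n := Nat.lt_succ_iff.mp (Finset.mem_range.mp hk)
        rw [hU k hkn, Finset.smul_sum, Finset.sum_Ico_eq_sum_range]
        have h1 : n + 1 - k = n - k + 1 := by omega
        rw [h1]
        refine Finset.sum_congr rfl fun j _ => ?_
        rw [Nat.add_sub_cancel_left, smul_smul]
    _ = ∑ i ∈ Finset.Ico 0 (n + 1), ∑ k ∈ Finset.Ico 0 (i + 1),
          (bern n k t * bern (n - k) (i - k) c) • W i :=
        Finset.sum_Ico_Ico_comm 0 (n + 1) _
    _ = ∑ i ∈ Finset.range (n + 1), bern n i (c + (1 - c) * t) • W i := by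
        rw [← Finset.range_eq_Ico]
        refine Finset.sum_congr rfl fun i hi => ?_
        have hin : i ≤ n := Nat.lt_succ_iff.mp (Finset.mem_range.mp hi)
        rw [← Finset.sum_smul, ← Finset.range_eq_Ico, key n i hin t c]
end

section
/- Let n be a natural number and w_0, …, w_n real numbers, and let p(t) := Σ_{i=0}^{n} B^n_i(t) w_i be the corresponding polynomial of degree at most n. Then for every k with 0 ≤ k ≤ n, the k-th derivative of p at 0 equals (n!/(n-k)!) · Σ_{i=0}^{k} C(k,i) (-1)^{k-i} w_i. -/
open Polynomial in
lemma iteratedDeriv_polyEval (P : ℝ[X]) (k : ℕ) :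
    iteratedDeriv k (fun x => P.eval x) = fun x => (derivative^[k] P).eval x := by
  induction k with
  | zero => simp
  | succ k ih =>
    rw [iteratedDeriv_succ, ih]
    funext x
    rw [Function.iterate_succ_apply']
    exact Polynomial.deriv (p := Polynomial.derivative^[k] P)

open Polynomial in
lemma coeff_one_sub_pow (m j : ℕ) :
    ((1 - X : ℝ[X]) ^ m).coeff j = (-1) ^ j * (m.choose j : ℝ) := by
  have h : (1 - X : ℝ[X]) = C (-1 : ℝ) * (X + C (-1 : ℝ)) := by
    rw [mul_add, ← C_mul]
    simp
    ring
  rw [h, mul_pow, ← C_pow, coeff_C_mul, coeff_X_add_C_pow]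
  by_cases hj : j ≤ m
  · have : (-1 : ℝ) ^ m = (-1) ^ (m - j) * (-1) ^ j := by
      rw [← pow_add, Nat.sub_add_cancel hj]
    rw [this]
    have h2 : ((-1 : ℝ)) ^ (m - j) * (-1) ^ (m - j) = 1 := by
      rw [← pow_add, ← two_mul, pow_mul]; norm_num
    linear_combination ((-1 : ℝ) ^ j * (m.choose j : ℝ)) * h2
  · rw [Nat.choose_eq_zero_of_lt (not_le.mp hj)]
    simp

open Polynomial in
lemma bern_iterate_deriv_at_zero {n i k : ℕ} (hik : i ≤ k) (hkn : k ≤ n) :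
    (derivative^[k] (bernsteinPolynomial ℝ n i)).eval 0
      = ((Nat.factorial n : ℝ) / (Nat.factorial (n - k) : ℝ))
          * (k.choose i : ℝ) * (-1) ^ (k - i) := by
  rw [← coeff_zero_eq_eval_zero, coeff_iterate_derivative]
  have hcoeff : (bernsteinPolynomial ℝ n i).coeff k
      = (n.choose i : ℝ) * ((-1) ^ (k - i) * ((n - i).choose (k - i) : ℝ)) := by
    rw [bernsteinPolynomial]
    rw [mul_assoc, ← C_eq_natCast, coeff_C_mul]
    have h3 := coeff_X_pow_mul ((1 - X : ℝ[X]) ^ (n - i)) i (k - i)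
    rw [Nat.sub_add_cancel hik] at h3
    rw [h3, coeff_one_sub_pow]
  rw [zero_add, hcoeff, Nat.descFactorial_self, nsmul_eq_mul]
  -- numeric identity
  have hchoose : (n.choose i) * ((n - i).choose (k - i)) = n.choose k * k.choose i :=
    (Nat.choose_mul hik).symm
  have hfac : (n.choose k : ℝ) * (k.factorial : ℝ) * ((n - k).factorial : ℝ)
      = (n.factorial : ℝ) := by
    exact_mod_cast congrArg (Nat.cast : ℕ → ℝ)
      (Nat.choose_mul_factorial_mul_factorial hkn)
  have hne : ((n - k).factorial : ℝ) ≠ 0 := Nat.cast_ne_zero.mpr (Nat.factorial_ne_zero _)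
  have hcast : ((n.choose i : ℕ) : ℝ) * (((n - i).choose (k - i) : ℕ) : ℝ)
      = ((n.choose k : ℕ) : ℝ) * ((k.choose i : ℕ) : ℝ) := by
    exact_mod_cast congrArg (Nat.cast : ℕ → ℝ) hchoose
  field_simp
  rw [← hfac]
  linear_combination ((k.factorial : ℝ) * ((n - k).factorial : ℝ)) * hcast

theorem bezier_iteratedDeriv_at_zero
    (n : ℕ) (w : ℕ → ℝ) (p : ℝ → ℝ)
    (hp : ∀ t : ℝ, p t = ∑ i ∈ Finset.range (n + 1), bern n i t * w i) :
    ∀ k ≤ n,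
      iteratedDeriv k p 0
        = ((Nat.factorial n : ℝ) / (Nat.factorial (n - k) : ℝ))
          * ∑ i ∈ Finset.range (k + 1), (k.choose i : ℝ) * (-1) ^ (k - i) * w i := by
  intro k hk
  classical
  set P : Polynomial ℝ :=
    ∑ i ∈ Finset.range (n + 1), Polynomial.C (w i) * bernsteinPolynomial ℝ n i with hP
  have hpeq : p = fun x => P.eval x := by
    funext t
    rw [hp t, hP]
    simp only [Polynomial.eval_finset_sum, Polynomial.eval_mul, Polynomial.eval_C]
    refine Finset.sum_congr rfl fun i _ => ?_
    rw [bernsteinPolynomial, bern]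
    simp [mul_comm]
  rw [hpeq, iteratedDeriv_polyEval]
  rw [hP]
  rw [Polynomial.iterate_derivative_sum]
  simp only [Polynomial.iterate_derivative_C_mul, Polynomial.eval_finset_sum,
    Polynomial.eval_mul, Polynomial.eval_C]
  have hsplit : ∀ i ∈ Finset.range (n + 1), i > k →
      (Polynomial.derivative^[k] (bernsteinPolynomial ℝ n i)).eval 0 = 0 := by
    intro i _ hi
    exact bernsteinPolynomial.iterate_derivative_at_0_eq_zero_of_lt ℝ n hi
  rw [← Finset.sum_subset (Finset.range_subset_range.mpr (Nat.succ_le_succ hk))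
    (fun i hi hni => by
      rw [hsplit i hi (by simpa using hni), mul_zero])]
  rw [Finset.mul_sum]
  refine Finset.sum_congr rfl fun i hi => ?_
  have hik : i ≤ k := Nat.lt_succ_iff.mp (Finset.mem_range.mp hi)
  rw [bern_iterate_deriv_at_zero hik hk]
  ring
end

section
/- Let d and n be natural numbers with d ≥ 1, let W_0, …, W_n be points of ℝ^d, let ω_0, …, ω_n be positive real numbers, and let c ∈ (0,1). Define the rational Bézier curve R_n(t) := (Σ_{i=0}^{n} ω_i B^n_i(t) W_i) / (Σ_{i=0}^{n} ω_i B^n_i(t)) for t ∈ [0,1], the subdivided weights ν_k := Σ_{i=0}^{k} ω_i B^k_i(c), and the subdivided control points V_k := (1/ν_k) Σ_{i=0}^{k} ω_i B^k_i(c) W_i for 0 ≤ k ≤ n. Then for every t ∈ [0,1], (Σ_{k=0}^{n} ν_k B^n_k(t) V_k) / (Σ_{k=0}^{n} ν_k B^n_k(t)) = R_n(c·t); that is, the rational Bézier curve with weights ν_k and control points V_k parametrizes the left segment R_n([0,c]). -/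
theorem rational_bezier_left_segment
    (d n : ℕ) (hd : 1 ≤ d) (W : ℕ → (Fin d → ℝ))
    (ω : ℕ → ℝ) (hω : ∀ i ≤ n, 0 < ω i)
    (c : ℝ) (hc : c ∈ Set.Ioo (0 : ℝ) 1)
    (R : ℝ → (Fin d → ℝ))
    (hR : ∀ t ∈ Set.Icc (0 : ℝ) 1,
      R t = (∑ i ∈ Finset.range (n + 1), ω i * bern n i t)⁻¹ •
        ∑ i ∈ Finset.range (n + 1), (ω i * bern n i t) • W i)
    (ν : ℕ → ℝ)
    (hν : ∀ k ≤ n, ν k = ∑ i ∈ Finset.range (k + 1), ω i * bern k i c)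
    (V : ℕ → (Fin d → ℝ))
    (hV : ∀ k ≤ n, V k = (ν k)⁻¹ •
      ∑ i ∈ Finset.range (k + 1), (ω i * bern k i c) • W i) :
    ∀ t ∈ Set.Icc (0 : ℝ) 1,
      (∑ k ∈ Finset.range (n + 1), ν k * bern n k t)⁻¹ •
        ∑ k ∈ Finset.range (n + 1), (ν k * bern n k t) • V k = R (c * t) := by
  intro t ht
  obtain ⟨ht0, ht1⟩ := ht
  obtain ⟨hc0, hc1⟩ := hc
  have hct : c * t ∈ Set.Icc (0 : ℝ) 1 :=
    ⟨mul_nonneg hc0.le ht0, by nlinarith⟩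
  have hbernpos : ∀ k i : ℕ, i ≤ k → 0 < bern k i c := by
    intro k i hik
    have := Nat.choose_pos hik
    unfold bern
    have h1 : (0 : ℝ) < (k.choose i : ℝ) := by exact_mod_cast this
    have h2 : (0 : ℝ) < 1 - c := by linarith
    positivity
  have hνpos : ∀ k ≤ n, 0 < ν k := by
    intro k hk
    rw [hν k hk]
    apply Finset.sum_pos
    · intro i hi
      rw [Finset.mem_range] at hi
      exact mul_pos (hω i (by omega)) (hbernpos k i (by omega))
    · exact ⟨0, Finset.mem_range.mpr (by omega)⟩
  have keyA : ∑ k ∈ Finset.range (n + 1), ν k * bern n k t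
      = ∑ i ∈ Finset.range (n + 1), ω i * bern n i (c * t) := by
    have step : ∀ k ∈ Finset.range (n + 1), ν k * bern n k t
        = ∑ i ∈ Finset.range (n + 1), ω i * bern k i c * bern n k t := by
      intro k hk
      rw [Finset.mem_range] at hk
      rw [hν k (by omega)]
      rw [show (∑ i ∈ Finset.range (k + 1), ω i * bern k i c)
          = ∑ i ∈ Finset.range (n + 1), ω i * bern k i c from
        Finset.sum_subset (Finset.range_subset_range.mpr (by omega))
          (fun i _ hni => by
            rw [Finset.mem_range, not_lt] at hni
            rw [bern_zero_of_lt (by omega), mul_zero]),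
        Finset.sum_mul]
    rw [Finset.sum_congr rfl step, Finset.sum_comm]
    apply Finset.sum_congr rfl
    intro i hi
    rw [Finset.mem_range] at hi
    rw [← bern_key n i (by omega) c t, Finset.mul_sum]
    apply Finset.sum_congr rfl
    intro k _
    ring
  have keyB : ∑ k ∈ Finset.range (n + 1), (ν k * bern n k t) • V k
      = ∑ i ∈ Finset.range (n + 1), (ω i * bern n i (c * t)) • W i := by
    have step : ∀ k ∈ Finset.range (n + 1), (ν k * bern n k t) • V k
        = ∑ i ∈ Finset.range (n + 1), (ω i * bern k i c * bern n k t) • W i := by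
      intro k hk
      rw [Finset.mem_range] at hk
      have hk' : k ≤ n := by omega
      rw [hV k hk', smul_smul, mul_assoc, mul_comm (bern n k t), ← mul_assoc,
        mul_inv_cancel₀ (hνpos k hk').ne', one_mul]
      rw [show (∑ i ∈ Finset.range (k + 1), (ω i * bern k i c) • W i)
          = ∑ i ∈ Finset.range (n + 1), (ω i * bern k i c) • W i from
        Finset.sum_subset (Finset.range_subset_range.mpr (by omega))
          (fun i _ hni => by
            rw [Finset.mem_range, not_lt] at hni
            rw [bern_zero_of_lt (by omega), mul_zero, zero_smul]),
        Finset.smul_sum]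
      apply Finset.sum_congr rfl
      intro i _
      rw [smul_smul]
      ring_nf
    rw [Finset.sum_congr rfl step, Finset.sum_comm]
    apply Finset.sum_congr rfl
    intro i hi
    rw [Finset.mem_range] at hi
    rw [← bern_key n i (by omega) c t, Finset.mul_sum, Finset.sum_smul]
    apply Finset.sum_congr rfl
    intro k _
    congr 1
    ring
  rw [keyA, keyB, hR _ hct]
end

section
/- Let d, n, m be natural numbers with d ≥ 1, let W_{ij} ∈ ℝ^d for 0 ≤ i ≤ n and 0 ≤ j ≤ m, and let c be a real number. Define the rectangular Bézier surface S_{nm}(t,u) := Σ_{i=0}^{n} Σ_{j=0}^{m} B^n_i(t) B^m_j(u) W_{ij} and the subdivided control points V_{ij} := Σ_{k=0}^{i} B^i_k(c) W_{kj} for 0 ≤ i ≤ n and 0 ≤ j ≤ m. Then for all real numbers t and u, Σ_{i=0}^{n} Σ_{j=0}^{m} B^n_i(t) B^m_j(u) V_{ij} = S_{nm}(c·t, u); that is, the surface with control points V_{ij} parametrizes the left part S_{nm}([0,c] × [0,1]) when (t,u) ranges over [0,1]². -/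
lemma bern_comp (n k : ℕ) (t c : ℝ) :
    ∑ i ∈ Finset.range (n + 1), bern n i t * bern i k c = bern n k (c * t) := by
  by_cases hk : k ≤ n
  · rw [Finset.range_eq_Ico,
      ← Finset.sum_Ico_consecutive _ (Nat.zero_le k) (by omega : k ≤ n + 1)]
    have h0 : ∑ i ∈ Finset.Ico 0 k, bern n i t * bern i k c = 0 := by
      apply Finset.sum_eq_zero
      intro i hi
      simp only [Finset.mem_Ico] at hi
      simp [bern, Nat.choose_eq_zero_of_lt hi.2]
    rw [h0, zero_add, Finset.sum_Ico_eq_sum_range]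
    have hlen : n + 1 - k = (n - k) + 1 := by omega
    rw [hlen]
    have hterm : ∀ j ∈ Finset.range ((n - k) + 1),
        bern n (k + j) t * bern (k + j) k c =
        ((n.choose k : ℝ) * (c * t) ^ k) *
          (((n - k).choose j : ℝ) * (t * (1 - c)) ^ j * (1 - t) ^ ((n - k) - j)) := by
      intro j hj
      simp only [Finset.mem_range] at hj
      have hjle : j ≤ n - k := by omega
      have hcm : n.choose (k + j) * (k + j).choose k = n.choose k * (n - k).choose j := by
        have := Nat.choose_mul (n := n) (show k ≤ k + j by omega)
        simpa [Nat.add_sub_cancel_left] using this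
      have hcm' : (n.choose (k + j) : ℝ) * ((k + j).choose k : ℝ)
          = (n.choose k : ℝ) * ((n - k).choose j : ℝ) := by
        exact_mod_cast congrArg (Nat.cast : ℕ → ℝ) hcm
      have e1 : n - (k + j) = (n - k) - j := by omega
      have e2 : k + j - k = j := by omega
      simp only [bern, e1, e2, pow_add, mul_pow]
      linear_combination (t ^ k * t ^ j * (1 - t) ^ (n - k - j) * c ^ k * (1 - c) ^ j) * hcm'
    rw [Finset.sum_congr rfl hterm, ← Finset.mul_sum]
    have hbin : ∑ j ∈ Finset.range ((n - k) + 1),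
        ((n - k).choose j : ℝ) * (t * (1 - c)) ^ j * (1 - t) ^ ((n - k) - j)
        = (1 - c * t) ^ (n - k) := by
      have := add_pow (t * (1 - c)) (1 - t) (n - k)
      have harg : t * (1 - c) + (1 - t) = 1 - c * t := by ring
      rw [harg] at this
      rw [this]
      apply Finset.sum_congr rfl
      intro j _
      ring
    rw [hbin, bern]
  · push_neg at hk
    have hr : bern n k (c * t) = 0 := by
      simp [bern, Nat.choose_eq_zero_of_lt hk]
    rw [hr]
    apply Finset.sum_eq_zero
    intro i hi
    simp only [Finset.mem_range] at hi
    have : i < k := by omega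
    simp [bern, Nat.choose_eq_zero_of_lt this]

theorem bezier_surface_left_part
    (d n m : ℕ) (hd : 1 ≤ d) (W : ℕ → ℕ → (Fin d → ℝ)) (c : ℝ)
    (S : ℝ → ℝ → (Fin d → ℝ))
    (hS : ∀ t u : ℝ, S t u = ∑ i ∈ Finset.range (n + 1), ∑ j ∈ Finset.range (m + 1),
      (bern n i t * bern m j u) • W i j)
    (V : ℕ → ℕ → (Fin d → ℝ))
    (hV : ∀ i ≤ n, ∀ j ≤ m, V i j = ∑ k ∈ Finset.range (i + 1), bern i k c • W k j) :
    ∀ t u : ℝ,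
      ∑ i ∈ Finset.range (n + 1), ∑ j ∈ Finset.range (m + 1),
        (bern n i t * bern m j u) • V i j = S (c * t) u := by
  intro t u
  rw [hS]
  have step1 : ∀ i ∈ Finset.range (n + 1), ∀ j ∈ Finset.range (m + 1),
      (bern n i t * bern m j u) • V i j =
      ∑ k ∈ Finset.range (n + 1), (bern n i t * bern i k c * bern m j u) • W k j := by
    intro i hi j hj
    simp only [Finset.mem_range] at hi hj
    rw [hV i (by omega) j (by omega), Finset.smul_sum]
    have hz : ∀ k ∈ Finset.range (n + 1), k ∉ Finset.range (i + 1) →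
        (bern n i t * bern i k c * bern m j u) • W k j = 0 := by
      intro k _ hk
      simp only [Finset.mem_range] at hk
      have : i < k := by omega
      simp [bern, Nat.choose_eq_zero_of_lt this]
    rw [← Finset.sum_subset (Finset.range_subset_range.2 (by omega : i + 1 ≤ n + 1)) hz]
    apply Finset.sum_congr rfl
    intro k _
    rw [smul_smul]
    ring_nf
  calc ∑ i ∈ Finset.range (n + 1), ∑ j ∈ Finset.range (m + 1),
        (bern n i t * bern m j u) • V i j
      = ∑ i ∈ Finset.range (n + 1), ∑ j ∈ Finset.range (m + 1),
          ∑ k ∈ Finset.range (n + 1), (bern n i t * bern i k c * bern m j u) • W k j := by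
        apply Finset.sum_congr rfl; intro i hi
        exact Finset.sum_congr rfl (fun j hj => step1 i hi j hj)
    _ = ∑ k ∈ Finset.range (n + 1), ∑ j ∈ Finset.range (m + 1),
          ∑ i ∈ Finset.range (n + 1), (bern n i t * bern i k c * bern m j u) • W k j := by
        calc ∑ i ∈ Finset.range (n + 1), ∑ j ∈ Finset.range (m + 1),
              ∑ k ∈ Finset.range (n + 1), (bern n i t * bern i k c * bern m j u) • W k j
            = ∑ i ∈ Finset.range (n + 1), ∑ k ∈ Finset.range (n + 1),
                ∑ j ∈ Finset.range (m + 1), (bern n i t * bern i k c * bern m j u) • W k j :=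
              Finset.sum_congr rfl fun i _ => Finset.sum_comm
          _ = ∑ k ∈ Finset.range (n + 1), ∑ i ∈ Finset.range (n + 1),
                ∑ j ∈ Finset.range (m + 1), (bern n i t * bern i k c * bern m j u) • W k j :=
              Finset.sum_comm
          _ = ∑ k ∈ Finset.range (n + 1), ∑ j ∈ Finset.range (m + 1),
                ∑ i ∈ Finset.range (n + 1), (bern n i t * bern i k c * bern m j u) • W k j :=
              Finset.sum_congr rfl fun k _ => Finset.sum_comm
    _ = ∑ k ∈ Finset.range (n + 1), ∑ j ∈ Finset.range (m + 1),
          (bern n k (c * t) * bern m j u) • W k j := by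
        apply Finset.sum_congr rfl; intro k _
        apply Finset.sum_congr rfl; intro j _
        rw [← Finset.sum_smul, ← bern_comp n k t c, Finset.sum_mul]
end
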